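/- Let (x_i)_{i∈ℕ} be a solution in K^ℕ (K a field) of f₁ = ⋯ = f_ℓ = 0 with g(x) ≠ 0, where g ∈ k₀[X] depends only on the zeroth shift and f₁,…,f_ℓ ∈ k₀[X, σ(X)] depend only on the zeroth and first shifts (X a tuple of n variables). Define for each word w in the free monoid M₂ = {a,b}* the quantity A(w) = the largest i such that w ends with a^i, and set y_w = x_{A(w)}, z_w = g(x₀)^{-1}, assuming g(x₀) ≠ 0. Then (y, z) ∈ (K^{M₂})^{n+1} is a solution of the M₂-system {f̃₁,…,f̃_ℓ, Z·σ^b(g̃) − 1} = 0, where f̃_i and g̃ are obtained by replacing σ with σ^a. -/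

import Mathlib

/-- `trailA w` is the largest `i` such that the word `w` ends with `a^i`,
where the generator `a` of the free monoid `{a,b}*` is encoded as `true`. -/
def trailA (w : List Bool) : ℕ := (w.reverse.takeWhile (fun c => c)).length

/-- Reduction from difference systems in `K^ℕ` to systems over the free monoid
`M₂ = {a,b}*`: from a solution `(xᵢ)` of `f₁ = ⋯ = f_ℓ = 0` (encoded by
polynomials `P t` in `(X, σ(X))`) with `g(x₀) ≠ 0` (encoded by `Q`), the
`M₂`-sequences `y_w = x_{A(w)}`, `z_w = g(x₀)⁻¹` solve the `M₂`-system
`{f̃₁, …, f̃_ℓ, Z·σ^b(g̃) − 1}`, where `σ^a` appends `a` and `σ^b` appends `b`. -/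
theorem stmt19 (K : Type*) [Field K] (n L : ℕ)
    (P : Fin L → MvPolynomial (Fin n ⊕ Fin n) K)
    (Q : MvPolynomial (Fin n) K)
    (x : ℕ → Fin n → K)
    (hsol : ∀ (t : Fin L) (i : ℕ),
      MvPolynomial.eval (Sum.elim (x i) (x (i + 1))) (P t) = 0)
    (hg : MvPolynomial.eval (x 0) Q ≠ 0)
    (y : List Bool → Fin n → K) (z : List Bool → K)
    (hy : ∀ w, y w = x (trailA w))
    (hz : ∀ w, z w = (MvPolynomial.eval (x 0) Q)⁻¹) :
    (∀ (t : Fin L) (w : List Bool),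
      MvPolynomial.eval (Sum.elim (y w) (y (w ++ [true]))) (P t) = 0) ∧
    (∀ w : List Bool, z w * MvPolynomial.eval (y (w ++ [false])) Q - 1 = 0) := by
  have ha : ∀ w : List Bool, trailA (w ++ [true]) = trailA w + 1 := by
    intro w; simp [trailA, List.takeWhile]
  have hb : ∀ w : List Bool, trailA (w ++ [false]) = 0 := by
    intro w; simp [trailA, List.takeWhile]
  constructor
  · intro t w
    rw [hy, hy, ha]
    exact hsol t (trailA w)
  · intro w
    rw [hz, hy, hb]
    field_simp
    exact sub_self 1
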